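/- Let F_n ⊂ F_{n+1} be σ-algebras, let G_{n+1}, E_{n+1} be F_{n+1}-measurable random vectors in ℝ^d with ‖E_{n+1}‖ ≤ M, and let U_{n+2} be independent of F_{n+1} with a compactly supported law ν absolutely continuous with respect to Lebesgue measure. Then there exist γ, μ > 0 (depending only on ν, M, d) such that for every unit vector w and every λ ∈ (0,1), almost surely P( inf_{v ∈ S(w,γ)} ( |v^T G_{n+1}|^2 + |v^T (U_{n+2} + λ G_{n+1} + E_{n+1})|^2 ) > μ | F_n ) ≥ 1/2. -/

import Mathlib

set_option maxHeartbeats 1000000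

open MeasureTheory ProbabilityTheory RealInnerProductSpace Filter

lemma hyperplane_volume_zero {d : ℕ} (w : EuclideanSpace ℝ (Fin d)) (hw : ‖w‖ = 1) (t : ℝ) :
    volume {x : EuclideanSpace ℝ (Fin d) | ⟪w, x⟫ = t} = 0 := by
  have hww : ⟪w, w⟫ = 1 := by
    rw [real_inner_self_eq_norm_sq, hw]; norm_num
  have hStop : (Submodule.span ℝ {w})ᗮ ≠ ⊤ := by
    intro h
    have : w ∈ (Submodule.span ℝ {w})ᗮ := h ▸ Submodule.mem_top
    have := (Submodule.mem_orthogonal_singleton_iff_inner_right).mp this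
    rw [hww] at this; norm_num at this
  have hset : {x : EuclideanSpace ℝ (Fin d) | ⟪w, x⟫ = t}
      = (fun x => (-(t • w)) + x) ⁻¹' ((Submodule.span ℝ {w})ᗮ : Set (EuclideanSpace ℝ (Fin d))) := by
    ext x
    simp only [Set.mem_setOf_eq, Set.mem_preimage, SetLike.mem_coe,
      Submodule.mem_orthogonal_singleton_iff_inner_right, inner_add_right, inner_neg_right,
      real_inner_smul_right, hww]
    constructor
    · intro h; rw [h]; ring
    · intro h; linarith
  rw [hset, measure_preimage_add, Measure.addHaar_submodule _ _ hStop]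

lemma exists_slab_lt {d : ℕ} (ν : Measure (EuclideanSpace ℝ (Fin d))) [IsProbabilityMeasure ν]
    (hac : ν ≪ volume) (w : EuclideanSpace ℝ (Fin d)) (hw : ‖w‖ = 1) (t : ℝ) :
    ∃ δ : ℝ, 0 < δ ∧ ν {x | |⟪w, x⟫ - t| ≤ δ} < 1/2 := by
  set s : ℕ → Set (EuclideanSpace ℝ (Fin d)) :=
    fun n => {x | |⟪w, x⟫ - t| ≤ 1/(n+1)} with hs
  have hcont : Continuous fun x : EuclideanSpace ℝ (Fin d) => ⟪w, x⟫ :=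
    continuous_const.inner continuous_id
  have hmeas : ∀ n, MeasurableSet (s n) := by
    intro n
    have : s n = (fun x => |⟪w, x⟫ - t|) ⁻¹' (Set.Iic (1/(n+1))) := rfl
    rw [this]
    exact ((hcont.sub continuous_const).abs).measurable measurableSet_Iic
  have hanti : Antitone s := by
    intro a b hab x hx
    simp only [hs, Set.mem_setOf_eq] at hx ⊢
    refine le_trans hx ?_
    apply one_div_le_one_div_of_le (by positivity)
    have : (a:ℝ) ≤ b := Nat.cast_le.mpr hab
    linarith
  have hinter : (⋂ n, s n) = {x | ⟪w, x⟫ = t} := by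
    ext x
    simp only [Set.mem_iInter, hs, Set.mem_setOf_eq]
    constructor
    · intro h
      have : |⟪w, x⟫ - t| = 0 := by
        by_contra hne
        have hpos : 0 < |⟪w, x⟫ - t| := lt_of_le_of_ne (abs_nonneg _) (Ne.symm hne)
        obtain ⟨n, hn⟩ := exists_nat_one_div_lt hpos
        exact absurd (h n) (not_le.mpr hn)
      have := abs_eq_zero.mp this; linarith
    · intro h n; rw [h]; simp; positivity
  have hlim : Tendsto (ν ∘ s) atTop (nhds (ν (⋂ n, s n))) :=
    tendsto_measure_iInter_atTop (fun n => (hmeas n).nullMeasurableSet) hanti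
      ⟨0, measure_ne_top _ _⟩
  rw [hinter, hac (hyperplane_volume_zero w hw t)] at hlim
  have hev : ∀ᶠ n in atTop, (ν ∘ s) n < 1/2 :=
    hlim.eventually_lt_const (by norm_num)
  obtain ⟨n, hn⟩ := hev.exists
  exact ⟨1/(n+1), by positivity, hn⟩

lemma uniform_slab {d : ℕ} (ν : Measure (EuclideanSpace ℝ (Fin d))) [IsProbabilityMeasure ν]
    (hac : ν ≪ volume) (R : ℝ) (hR : 0 ≤ R)
    (hsupp : ν ((Metric.closedBall (0 : EuclideanSpace ℝ (Fin d)) R)ᶜ) = 0) :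
    ∃ ε : ℝ, 0 < ε ∧ ε ≤ 1/2 ∧ ∀ w : EuclideanSpace ℝ (Fin d), ‖w‖ = 1 → ∀ t : ℝ,
      ν {x | |⟪w, x⟫ - t| ≤ ε} ≤ 1/2 := by
  by_cases hsne : (Metric.sphere (0 : EuclideanSpace ℝ (Fin d)) 1).Nonempty
  swap
  · refine ⟨1/2, by norm_num, le_refl _, fun w hw t => absurd ⟨w, ?_⟩ hsne⟩
    simp [hw]
  -- compact parameter set
  set C : Set (EuclideanSpace ℝ (Fin d) × ℝ) :=
    Metric.sphere 0 1 ×ˢ Set.Icc (-(R+1)) (R+1) with hC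
  have hCcomp : IsCompact C := (isCompact_sphere 0 1).prod isCompact_Icc
  have H : ∀ p : EuclideanSpace ℝ (Fin d) × ℝ, p ∈ C →
      ∃ δ : ℝ, 0 < δ ∧ ν {x | |⟪p.1, x⟫ - p.2| ≤ δ} < 1/2 := by
    intro p hp
    exact exists_slab_lt ν hac p.1 (by simpa using mem_sphere_zero_iff_norm.mp hp.1) p.2
  choose! δ hδpos hδlt using H
  -- open cover
  set Ucov : EuclideanSpace ℝ (Fin d) × ℝ → Set (EuclideanSpace ℝ (Fin d) × ℝ) :=
    fun p => Metric.ball p.1 (δ p/(4*(R+1))) ×ˢ Metric.ball p.2 (δ p/4) with hU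
  have hUopen : ∀ p ∈ C, IsOpen (Ucov p) := fun p _ =>
    (Metric.isOpen_ball).prod Metric.isOpen_ball
  have hcover : C ⊆ ⋃ p ∈ C, Ucov p := by
    intro p hp
    refine Set.mem_biUnion hp ?_
    constructor
    · exact Metric.mem_ball_self (by have := hδpos p hp; positivity)
    · exact Metric.mem_ball_self (by have := hδpos p hp; positivity)
  obtain ⟨b, hbC, hbfin, hbcover⟩ := hCcomp.elim_finite_subcover_image hUopen hcover
  have hCne : C.Nonempty := by
    obtain ⟨w₀, hw₀⟩ := hsne
    exact ⟨(w₀, 0), hw₀, by constructor <;> simp <;> linarith⟩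
  have hbne : b.Nonempty := by
    rcases Set.eq_empty_or_nonempty b with h | h
    · exfalso
      obtain ⟨p, hp⟩ := hCne
      have := hbcover hp
      simp [h] at this
    · exact h
  -- min of δ over the finite cover
  set fb := hbfin.toFinset with hfb
  have hfbne : fb.Nonempty := by
    rwa [hfb, Set.Finite.toFinset_nonempty]
  set ε : ℝ := min (1/2) (fb.inf' hfbne (fun p => δ p / 2)) with hε
  have hεpos : 0 < ε := by
    rw [hε]
    apply lt_min (by norm_num)
    rw [Finset.lt_inf'_iff]
    intro p hp
    have hpC : p ∈ C := hbC (hbfin.mem_toFinset.mp hp)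
    have := hδpos p hpC
    positivity
  have hεhalf : ε ≤ 1/2 := min_le_left _ _
  refine ⟨ε, hεpos, hεhalf, fun w hw t => ?_⟩
  set B := Metric.closedBall (0 : EuclideanSpace ℝ (Fin d)) R with hB
  have hsplit : ν {x | |⟪w, x⟫ - t| ≤ ε}
      ≤ ν ({x | |⟪w, x⟫ - t| ≤ ε} ∩ B) + ν Bᶜ := by
    refine le_trans (measure_mono ?_) (measure_union_le _ _)
    intro x hx
    by_cases hxB : x ∈ B
    · exact Or.inl ⟨hx, hxB⟩
    · exact Or.inr hxB
  rw [hsupp] at hsplit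
  by_cases hT : |t| ≤ R + 1
  · -- (w,t) ∈ C, find cover element
    have hwtC : (w, t) ∈ C := by
      refine ⟨mem_sphere_zero_iff_norm.mpr hw, ?_⟩
      rw [Set.mem_Icc]
      constructor <;> [linarith [neg_abs_le t]; linarith [le_abs_self t]]
    obtain ⟨p, hpfb, hpmem⟩ := Set.mem_iUnion₂.mp (hbcover hwtC)
    have hpC : p ∈ C := hbC hpfb
    have hεδ : ε ≤ δ p / 2 := by
      refine le_trans (min_le_right _ _) (Finset.inf'_le _ ?_)
      rwa [hfb, hbfin.mem_toFinset]
    obtain ⟨hp1, hp2⟩ := hpmem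
    -- slab ∩ B ⊆ big slab around p
    have hsub : {x | |⟪w, x⟫ - t| ≤ ε} ∩ B ⊆ {x | |⟪p.1, x⟫ - p.2| ≤ δ p} := by
      rintro x ⟨hx1, hx2⟩
      simp only [Set.mem_setOf_eq] at hx1 ⊢
      have hxnorm : ‖x‖ ≤ R := by
        rw [hB, Metric.mem_closedBall, dist_zero_right] at hx2; exact hx2
      have hd1 : ‖p.1 - w‖ < δ p/(4*(R+1)) := by
        have h := hp1
        rwa [Metric.mem_ball, dist_comm, dist_eq_norm] at h
      have hd2 : |t - p.2| < δ p/4 := by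
        have h := hp2
        rwa [Metric.mem_ball, Real.dist_eq] at h
      have hinner : |⟪p.1 - w, x⟫| ≤ δ p / 4 := by
        refine le_trans (abs_real_inner_le_norm _ _) ?_
        have h1 : ‖p.1 - w‖ * ‖x‖ ≤ (δ p/(4*(R+1))) * (R+1) := by
          have hδp0 : 0 < δ p := hδpos p hpC
          apply mul_le_mul hd1.le (by linarith) (norm_nonneg _)
          positivity
        calc ‖p.1 - w‖ * ‖x‖ ≤ (δ p/(4*(R+1))) * (R+1) := h1
          _ = δ p / 4 := by field_simp
      have hkey : ⟪p.1, x⟫ - p.2 = (⟪p.1 - w, x⟫) + (⟪w, x⟫ - t) + (t - p.2) := by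
        rw [inner_sub_left]; ring
      rw [hkey]
      have := abs_add_three (⟪p.1 - w, x⟫) (⟪w, x⟫ - t) (t - p.2)
      have hεδp : ε ≤ δ p / 2 := hεδ
      linarith
    calc ν {x | |⟪w, x⟫ - t| ≤ ε} ≤ ν ({x | |⟪w, x⟫ - t| ≤ ε} ∩ B) + 0 := hsplit
      _ = ν ({x | |⟪w, x⟫ - t| ≤ ε} ∩ B) := by rw [add_zero]
      _ ≤ ν {x | |⟪p.1, x⟫ - p.2| ≤ δ p} := measure_mono hsub
      _ ≤ 1/2 := (hδlt p hpC).le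
  · -- |t| > R+1 : slab ∩ B = ∅
    have hempty : {x | |⟪w, x⟫ - t| ≤ ε} ∩ B = ∅ := by
      rw [Set.eq_empty_iff_forall_notMem]
      rintro x ⟨hx1, hx2⟩
      simp only [Set.mem_setOf_eq] at hx1
      have hxnorm : ‖x‖ ≤ R := by
        rw [hB, Metric.mem_closedBall, dist_zero_right] at hx2; exact hx2
      have h1 : |⟪w, x⟫| ≤ R := by
        refine le_trans (abs_real_inner_le_norm _ _) ?_
        rw [hw, one_mul]; exact hxnorm
      have h2 : |t| - |⟪w, x⟫| ≤ ε := by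
        have := abs_sub_abs_le_abs_sub t (⟪w, x⟫)
        rw [abs_sub_comm] at hx1
        linarith
      push_neg at hT
      linarith
    calc ν {x | |⟪w, x⟫ - t| ≤ ε} ≤ ν (∅ : Set (EuclideanSpace ℝ (Fin d))) + 0 := by
          rw [← hempty]; exact hsplit
      _ = 0 := by simp
      _ ≤ 1/2 := zero_le

lemma condexp_indicator_half {Ω : Type*} {F m : MeasurableSpace Ω} (hF : F ≤ m)
    (μ : Measure Ω) [IsProbabilityMeasure μ] {T : Set Ω} (hT : MeasurableSet[m] T)
    (h : ∀ s : Set Ω, MeasurableSet[F] s → μ s ≤ 2 * μ (T ∩ s)) :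
    ∀ᵐ ω ∂μ, (1/2 : ℝ) ≤ (μ[Set.indicator T (fun _ => (1:ℝ))|F]) ω := by
  haveI : SigmaFinite (μ.trim hF) := by
    haveI : IsFiniteMeasure (μ.trim hF) := isFiniteMeasure_trim hF
    infer_instance
  set f : Ω → ℝ := Set.indicator T (fun _ => (1:ℝ)) with hf
  have hfint : Integrable f μ := (integrable_const (1:ℝ)).indicator hT
  set g : Ω → ℝ := μ[f|F] with hg
  have hgsm : StronglyMeasurable[F] g := stronglyMeasurable_condExp
  set s : ℕ → Set Ω := fun n => {ω | g ω ≤ 1/2 - 1/(n+1)} with hs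
  have hsmeas : ∀ n, MeasurableSet[F] (s n) :=
    fun n => hgsm.measurable measurableSet_Iic
  have hsnull : ∀ n, μ (s n) = 0 := by
    intro n
    have hint : ∫ ω in s n, g ω ∂μ = ∫ ω in s n, f ω ∂μ :=
      setIntegral_condExp hF hfint (hsmeas n)
    have hfint' : ∫ ω in s n, f ω ∂μ = (μ (T ∩ s n)).toReal := by
      rw [hf, setIntegral_indicator hT]
      simp [Set.inter_comm, Measure.restrict_apply hT]; rfl
    have hub : ∫ ω in s n, g ω ∂μ ≤ (1/2 - 1/(n+1)) * (μ (s n)).toReal := by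
      have := setIntegral_mono_on (integrable_condExp.integrableOn)
        (integrableOn_const (C := (1/2 - 1/((n:ℝ)+1) : ℝ)) (measure_lt_top _ _).ne)
        (hF _ (hsmeas n)) (fun ω hω => by exact hω)
      calc ∫ ω in s n, g ω ∂μ ≤ ∫ _ω in s n, (1/2 - 1/(n+1) : ℝ) ∂μ := this
        _ = (μ (s n)).toReal * (1/2 - 1/(n+1)) := by rw [setIntegral_const]; simp; exact Or.inl rfl
        _ = (1/2 - 1/(n+1)) * (μ (s n)).toReal := by ring
    have hlb : (μ (s n)).toReal ≤ 2 * (μ (T ∩ s n)).toReal := by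
      have h2 := h (s n) (hsmeas n)
      have : (μ (s n)).toReal ≤ (2 * μ (T ∩ s n)).toReal := by
        apply ENNReal.toReal_mono _ h2
        exact ENNReal.mul_ne_top (by norm_num) (measure_ne_top _ _)
      rwa [ENNReal.toReal_mul, ENNReal.toReal_ofNat] at this
    have hpos : (0:ℝ) < 1/(n+1) := by positivity
    have h0 : (μ (s n)).toReal = 0 := by nlinarith [ENNReal.toReal_nonneg (a := μ (s n))]
    exact (ENNReal.toReal_eq_zero_iff _).mp h0 |>.resolve_right (measure_ne_top _ _)
  have hsub : {ω | g ω < 1/2} ⊆ ⋃ n, s n := by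
    intro ω hω
    simp only [Set.mem_setOf_eq] at hω
    obtain ⟨n, hn⟩ := exists_nat_one_div_lt (show (0:ℝ) < 1/2 - g ω by linarith)
    exact Set.mem_iUnion.mpr ⟨n, by simp only [hs, Set.mem_setOf_eq]; push_cast; push_cast at hn; linarith⟩
  have : μ {ω | g ω < 1/2} = 0 :=
    measure_mono_null hsub (measure_iUnion_null_iff.mpr hsnull)
  filter_upwards [measure_eq_zero_iff_ae_notMem.mp this] with ω hω
  simpa using not_lt.mp (by simpa using hω)

lemma indep_half {d : ℕ} {Ω : Type*} {F' m : MeasurableSpace Ω} {μ : Measure Ω}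
    [IsProbabilityMeasure μ] (hF'm : F' ≤ m)
    (E U : Ω → EuclideanSpace ℝ (Fin d)) (hE : Measurable[F'] E) (hU : Measurable[m] U)
    (hUindep : Indep (_mΩ := m) (MeasurableSpace.comap U inferInstance) F' μ)
    (ν : Measure (EuclideanSpace ℝ (Fin d))) [IsProbabilityMeasure ν]
    (hUlaw : μ.map U = ν)
    (w : EuclideanSpace ℝ (Fin d)) (ε : ℝ)
    (hεbound : ∀ e : EuclideanSpace ℝ (Fin d), (1/2 : ENNReal) ≤ ν {u | 3*ε < |⟪w, u + e⟫|})
    {s : Set Ω} (hs : MeasurableSet[F'] s) :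
    μ s ≤ 2 * μ ({ω | 3*ε < |⟪w, U ω + E ω⟫|} ∩ s) := by
  set W : Ω → (EuclideanSpace ℝ (Fin d)) × ℝ :=
    fun ω => (E ω, s.indicator (fun _ => (1:ℝ)) ω) with hW
  have hWF' : Measurable[F'] W := hE.prodMk (measurable_const.indicator hs)
  have hWm : Measurable[m] W := hWF'.mono hF'm le_rfl
  have hindep : IndepFun (_mΩ := m) W U μ :=
    indep_of_indep_of_le_left hUindep.symm hWF'.comap_le
  have hmap : μ.map (fun ω => (W ω, U ω)) = (μ.map W).prod (μ.map U) :=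
    (indepFun_iff_map_prod_eq_prod_map_map hWm.aemeasurable hU.aemeasurable).mp hindep
  set Cs : Set ((EuclideanSpace ℝ (Fin d) × ℝ) × EuclideanSpace ℝ (Fin d)) :=
    {p | p.1.2 = 1 ∧ 3*ε < |⟪w, p.2 + p.1.1⟫|} with hCs
  have hCmeas : MeasurableSet Cs := by
    have h1 : MeasurableSet {p : (EuclideanSpace ℝ (Fin d) × ℝ) × EuclideanSpace ℝ (Fin d) |
        p.1.2 = 1} := (measurable_fst.snd) (measurableSet_singleton (1:ℝ))
    have hcont : Continuous fun p : (EuclideanSpace ℝ (Fin d) × ℝ) × EuclideanSpace ℝ (Fin d) =>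
        |⟪w, p.2 + p.1.1⟫| :=
      (continuous_const.inner (continuous_snd.add (continuous_fst.fst))).abs
    have h2 : MeasurableSet {p : (EuclideanSpace ℝ (Fin d) × ℝ) × EuclideanSpace ℝ (Fin d) |
        3*ε < |⟪w, p.2 + p.1.1⟫|} := hcont.measurable measurableSet_Ioi
    exact h1.inter h2
  have hkey : {ω | 3*ε < |⟪w, U ω + E ω⟫|} ∩ s = (fun ω => (W ω, U ω)) ⁻¹' Cs := by
    ext ω
    simp only [Set.mem_inter_iff, Set.mem_setOf_eq, Set.mem_preimage, hCs, hW,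
      Set.indicator_apply]
    by_cases hωs : ω ∈ s <;> simp [hωs] <;> tauto
  have hprod : μ ({ω | 3*ε < |⟪w, U ω + E ω⟫|} ∩ s) = ((μ.map W).prod ν) Cs := by
    rw [hkey, ← Measure.map_apply (hWm.prodMk hU) hCmeas, hmap, hUlaw]
  have hsect : ∀ q : EuclideanSpace ℝ (Fin d) × ℝ,
      Set.indicator {q : EuclideanSpace ℝ (Fin d) × ℝ | q.2 = 1} (fun _ => (1/2 : ENNReal)) q
      ≤ ν (Prod.mk q ⁻¹' Cs) := by
    intro q
    by_cases hq : q.2 = 1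
    · have : Prod.mk q ⁻¹' Cs = {u | 3*ε < |⟪w, u + q.1⟫|} := by
        ext u; simp [hCs, hq]
      have hqmem : q ∈ {q : EuclideanSpace ℝ (Fin d) × ℝ | q.2 = 1} := hq
      rw [this, Set.indicator_of_mem hqmem]
      exact hεbound q.1
    · have hqnot : q ∉ {q : EuclideanSpace ℝ (Fin d) × ℝ | q.2 = 1} := hq
      rw [Set.indicator_of_notMem hqnot]
      exact zero_le
  have hhalf : (1/2 : ENNReal) * μ s ≤ ((μ.map W).prod ν) Cs := by
    rw [Measure.prod_apply hCmeas]
    have hmeas1 : MeasurableSet {q : EuclideanSpace ℝ (Fin d) × ℝ | q.2 = 1} :=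
      measurable_snd (measurableSet_singleton (1:ℝ))
    calc (1/2 : ENNReal) * μ s
        = (1/2 : ENNReal) * (μ.map W) {q | q.2 = 1} := by
          congr 1
          rw [Measure.map_apply hWm hmeas1]
          congr 1
          ext ω
          simp only [Set.mem_preimage, Set.mem_setOf_eq, hW, Set.indicator_apply]
          by_cases hωs : ω ∈ s <;> simp [hωs]
      _ = ∫⁻ q, Set.indicator {q : EuclideanSpace ℝ (Fin d) × ℝ | q.2 = 1}
            (fun _ => (1/2 : ENNReal)) q ∂(μ.map W) := by
          rw [lintegral_indicator hmeas1]
          simp [mul_comm]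
      _ ≤ ∫⁻ q, ν (Prod.mk q ⁻¹' Cs) ∂(μ.map W) := lintegral_mono hsect
  calc μ s = 2 * ((1/2 : ENNReal) * μ s) := by
        rw [← mul_assoc, one_div, ENNReal.mul_inv_cancel (by norm_num) (by norm_num), one_mul]
    _ ≤ 2 * (((μ.map W).prod ν) Cs) := by exact mul_le_mul_right hhalf 2
    _ = 2 * μ ({ω | 3*ε < |⟪w, U ω + E ω⟫|} ∩ s) := by rw [hprod]

/-- Lemma 6 of the paper: with `G`, `E` measurable w.r.t. `F'` (`F ⊆ F'`),
`‖E‖ ≤ M`, and `U` independent of `F'` with compactly supported absolutely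
continuous law `ν`, there are `γ, c > 0` such that for every unit vector `w`
and every `l ∈ (0,1)`, almost surely
`P( inf_{v ∈ S(w,γ)} (|vᵀG|² + |vᵀ(U + l G + E)|²) > c | F ) ≥ 1/2`. -/
theorem eigen_lower_bound_conditional {d : ℕ}
    {Ω : Type*} {m : MeasurableSpace Ω} {μ : Measure Ω} [IsProbabilityMeasure μ]
    {F F' : MeasurableSpace Ω} (hFF' : F ≤ F') (hF'm : F' ≤ m)
    (G E U : Ω → EuclideanSpace ℝ (Fin d)) (M : ℝ) (hM : 0 < M)
    (hG : Measurable[F'] G) (hE : Measurable[F'] E)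
    (hEbdd : ∀ ω, ‖E ω‖ ≤ M)
    (hU : Measurable[m] U)
    (hUindep : Indep (_mΩ := m) (MeasurableSpace.comap U inferInstance) F' μ)
    (ν : Measure (EuclideanSpace ℝ (Fin d))) [IsProbabilityMeasure ν]
    (hUlaw : @Measure.map Ω (EuclideanSpace ℝ (Fin d)) m (by infer_instance) U μ = ν)
    (hac : ν ≪ volume)
    (hcompact : ∃ K : Set (EuclideanSpace ℝ (Fin d)), IsCompact K ∧ ν Kᶜ = 0) :
    ∃ γ > (0:ℝ), ∃ c > (0:ℝ),
      ∀ w : EuclideanSpace ℝ (Fin d), ‖w‖ = 1 →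
      ∀ l : ℝ, 0 < l → l < 1 →
        ∀ᵐ ω ∂μ,
          (1/2 : ℝ) ≤
            (μ[Set.indicator
                {ω' | c < ⨅ v : {v : EuclideanSpace ℝ (Fin d) // ‖v‖ = 1 ∧ ‖v - w‖ ≤ γ},
                  ((inner ℝ v.1 (G ω') : ℝ) ^ 2
                    + (inner ℝ v.1 (U ω' + l • G ω' + E ω') : ℝ) ^ 2)}
                (fun _ => (1:ℝ)) | F]) ω := by
  obtain ⟨K, hKcomp, hKnull⟩ := hcompact
  obtain ⟨R₀, hR₀⟩ := hKcomp.isBounded.subset_closedBall 0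
  set R : ℝ := max R₀ 0 with hRdef
  have hR : 0 ≤ R := le_max_right _ _
  have hKsub : K ⊆ Metric.closedBall 0 R :=
    hR₀.trans (Metric.closedBall_subset_closedBall (le_max_left _ _))
  have hsupp : ν ((Metric.closedBall (0 : EuclideanSpace ℝ (Fin d)) R)ᶜ) = 0 :=
    measure_mono_null (Set.compl_subset_compl.mpr hKsub) hKnull
  obtain ⟨ε₀, hε₀pos, hε₀half, hslab⟩ := uniform_slab ν hac R hR hsupp
  set ε : ℝ := ε₀/3 with hεdef
  have hεpos : 0 < ε := by positivity
  set γ : ℝ := ε/(R+M+1) with hγdef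
  have hγpos : 0 < γ := by positivity
  set c : ℝ := ε^2/2 with hcdef
  have hcpos : 0 < c := by positivity
  refine ⟨γ, hγpos, c, hcpos, ?_⟩
  intro w hw l hl0 hl1
  -- lower bound on ν of good directions
  have hνbound : ∀ e : EuclideanSpace ℝ (Fin d),
      (1/2 : ENNReal) ≤ ν {u | 3*ε < |⟪w, u + e⟫|} := by
    intro e
    set D : Set (EuclideanSpace ℝ (Fin d)) := {u | 3*ε < |⟪w, u + e⟫|} with hD
    have hDmeas : MeasurableSet D := by
      have : Continuous fun u : EuclideanSpace ℝ (Fin d) => |⟪w, u + e⟫| :=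
        (continuous_const.inner (continuous_id.add continuous_const)).abs
      exact this.measurable measurableSet_Ioi
    have hcompl : ν Dᶜ ≤ 1/2 := by
      have heq : Dᶜ = {x | |⟪w, x⟫ - (-⟪w, e⟫)| ≤ ε₀} := by
        ext u
        simp only [hD, Set.mem_compl_iff, Set.mem_setOf_eq, not_lt, inner_add_right]
        constructor
        · intro h
          rw [sub_neg_eq_add]
          calc |⟪w, u⟫ + ⟪w, e⟫| ≤ 3*ε := h
            _ = ε₀ := by rw [hεdef]; ring
        · intro h
          rw [sub_neg_eq_add] at h
          calc |⟪w, u⟫ + ⟪w, e⟫| ≤ ε₀ := h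
            _ = 3*ε := by rw [hεdef]; ring
      rw [heq]
      exact hslab w hw _
    have hadd : ν D + ν Dᶜ = 1 := by
      rw [measure_add_measure_compl hDmeas, measure_univ]
    have hstep : (1/2 : ENNReal) + 1/2 ≤ ν D + 1/2 := by
      calc (1/2 : ENNReal) + 1/2 = 1 := ENNReal.add_halves 1
        _ = ν D + ν Dᶜ := hadd.symm
        _ ≤ ν D + 1/2 := add_le_add_right hcompl _
    exact (ENNReal.add_le_add_iff_right (by norm_num)).mp hstep
  -- the cap and target set
  haveI hcapne : Nonempty {v : EuclideanSpace ℝ (Fin d) // ‖v‖ = 1 ∧ ‖v - w‖ ≤ γ} :=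
    ⟨⟨w, hw, by simp [hγpos.le]⟩⟩
  set T : Set Ω := {ω' | c < ⨅ v : {v : EuclideanSpace ℝ (Fin d) // ‖v‖ = 1 ∧ ‖v - w‖ ≤ γ},
      ((inner ℝ v.1 (G ω') : ℝ) ^ 2
        + (inner ℝ v.1 (U ω' + l • G ω' + E ω') : ℝ) ^ 2)} with hT
  -- measurability of T
  set φ : {v : EuclideanSpace ℝ (Fin d) // ‖v‖ = 1 ∧ ‖v - w‖ ≤ γ} →
      EuclideanSpace ℝ (Fin d) × EuclideanSpace ℝ (Fin d) → ℝ :=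
    fun v p => ⟪v.1, p.1⟫^2 + ⟪v.1, p.2⟫^2 with hφ
  have hφcont : ∀ v, Continuous (φ v) := fun v =>
    ((continuous_const.inner continuous_fst).pow 2).add
      ((continuous_const.inner continuous_snd).pow 2)
  have hbdd : ∀ p, BddBelow (Set.range fun v => φ v p) := by
    intro p
    refine ⟨0, ?_⟩
    rintro x ⟨v, rfl⟩
    positivity
  have hSeq : {p : EuclideanSpace ℝ (Fin d) × EuclideanSpace ℝ (Fin d) | c < ⨅ v, φ v p}
      = (⋂ n : ℕ, ⋃ v, {p | φ v p < c + 1/(n+1)})ᶜ := by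
    ext p
    simp only [Set.mem_setOf_eq, Set.mem_compl_iff, Set.mem_iInter, Set.mem_iUnion,
      not_forall, not_exists, not_lt]
    constructor
    · intro h
      obtain ⟨n, hn⟩ := exists_nat_one_div_lt (sub_pos.mpr h)
      refine ⟨n, fun v => ?_⟩
      have h1 := ciInf_le (hbdd p) v
      have hc : c + 1/(n+1) < ⨅ v, φ v p := by linarith
      exact (hc.trans_le h1).le
    · rintro ⟨n, hn⟩
      have h1 : c + 1/(n+1) ≤ ⨅ v, φ v p := le_ciInf hn
      have hpos : (0:ℝ) < 1/(n+1) := by positivity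
      linarith
  have hSmeas : MeasurableSet
      {p : EuclideanSpace ℝ (Fin d) × EuclideanSpace ℝ (Fin d) | c < ⨅ v, φ v p} := by
    rw [hSeq]
    refine (MeasurableSet.iInter fun n => ?_).compl
    refine (isOpen_iUnion fun v => ?_).measurableSet
    exact isOpen_lt (hφcont v) continuous_const
  have hTmeas : MeasurableSet[m] T := by
    have hGm : Measurable[m] G := hG.mono hF'm le_rfl
    have hEm : Measurable[m] E := hE.mono hF'm le_rfl
    have hΦ : Measurable[m] fun ω => (G ω, U ω + l • G ω + E ω) :=
      hGm.prodMk ((hU.add (hGm.const_smul l)).add hEm)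
    exact hΦ hSmeas
  -- pointwise inclusion
  have hincl : ∀ ω, 3*ε < |⟪w, U ω + E ω⟫| → ‖U ω‖ ≤ R → ω ∈ T := by
    intro ω h1 h2
    have key : ∀ v : {v : EuclideanSpace ℝ (Fin d) // ‖v‖ = 1 ∧ ‖v - w‖ ≤ γ},
        2*c ≤ (inner ℝ v.1 (G ω) : ℝ)^2 + (inner ℝ v.1 (U ω + l • G ω + E ω) : ℝ)^2 := by
      rintro ⟨v, hv1, hv2⟩
      set a : ℝ := ⟪v, G ω⟫ with ha
      have hsplit : (inner ℝ v (U ω + l • G ω + E ω) : ℝ) = ⟪v, U ω + E ω⟫ + l * a := by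
        simp only [inner_add_right, real_inner_smul_right, ha]
        ring
      have h2c : 2*c = ε^2 := by rw [hcdef]; ring
      by_cases hA : ε ≤ |a|
      · have haa : ε^2 ≤ a^2 := by nlinarith [abs_nonneg a, sq_abs a]
        have hnn : (0:ℝ) ≤ (inner ℝ v (U ω + l • G ω + E ω) : ℝ)^2 := sq_nonneg _
        rw [h2c]
        simp only [← ha]
        linarith
      · push_neg at hA
        have hUE : ‖U ω + E ω‖ ≤ R + M :=
          le_trans (norm_add_le _ _) (add_le_add h2 (hEbdd ω))
        have hvw : |⟪v - w, U ω + E ω⟫| ≤ γ * (R + M) := by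
          refine le_trans (abs_real_inner_le_norm _ _) ?_
          exact mul_le_mul hv2 hUE (norm_nonneg _) hγpos.le
        have hγRM : γ * (R + M) ≤ ε := by
          rw [hγdef]
          rw [div_mul_eq_mul_div, div_le_iff₀ (by linarith)]
          nlinarith
        have h3 : 2*ε ≤ |⟪v, U ω + E ω⟫| := by
          have hdecomp : ⟪v, U ω + E ω⟫ = ⟪w, U ω + E ω⟫ + ⟪v - w, U ω + E ω⟫ := by
            rw [inner_sub_left]; ring
          rw [hdecomp]
          have habs : |⟪w, U ω + E ω⟫| ≤ |⟪w, U ω + E ω⟫ + ⟪v - w, U ω + E ω⟫|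
              + |⟪v - w, U ω + E ω⟫| := by
            have h' := abs_add_le (⟪w, U ω + E ω⟫ + ⟪v - w, U ω + E ω⟫)
              (-⟪v - w, U ω + E ω⟫)
            simp only [add_neg_cancel_right, abs_neg] at h'
            exact h'
          linarith
        have h4 : ε ≤ |(inner ℝ v (U ω + l • G ω + E ω) : ℝ)| := by
          rw [hsplit]
          have hla : |l * a| ≤ ε := by
            rw [abs_mul, abs_of_pos hl0]
            nlinarith
          have habs : |⟪v, U ω + E ω⟫| ≤ |⟪v, U ω + E ω⟫ + l * a| + |l * a| := by
            have h' := abs_add_le (⟪v, U ω + E ω⟫ + l * a) (-(l * a))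
            simp only [add_neg_cancel_right, abs_neg] at h'
            exact h'
          linarith
        have h5 : ε^2 ≤ (inner ℝ v (U ω + l • G ω + E ω) : ℝ)^2 := by
          nlinarith [sq_abs (inner ℝ v (U ω + l • G ω + E ω) : ℝ)]
        rw [h2c]
        have hnn : (0:ℝ) ≤ a^2 := sq_nonneg _
        simp only [← ha]
        linarith
    have hie : 2*c ≤ ⨅ v : {v : EuclideanSpace ℝ (Fin d) // ‖v‖ = 1 ∧ ‖v - w‖ ≤ γ},
        ((inner ℝ v.1 (G ω) : ℝ)^2 + (inner ℝ v.1 (U ω + l • G ω + E ω) : ℝ)^2) := le_ciInf key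
    have hlt : c < 2*c := by linarith
    exact lt_of_lt_of_le hlt hie
  -- conclude via condexp lemma
  refine condexp_indicator_half (hFF'.trans hF'm) μ hTmeas ?_
  intro s hsF
  have hsF' : MeasurableSet[F'] s := hFF' _ hsF
  have h1 : μ s ≤ 2 * μ ({ω | 3*ε < |⟪w, U ω + E ω⟫|} ∩ s) :=
    indep_half hF'm E U hE hU hUindep ν hUlaw w ε hνbound hsF'
  have hnull : μ {ω | ¬ ‖U ω‖ ≤ R} = 0 := by
    have heq : {ω | ¬ ‖U ω‖ ≤ R} = U ⁻¹' (Metric.closedBall 0 R)ᶜ := by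
      ext ω
      simp [Metric.mem_closedBall, dist_zero_right]
    rw [heq, ← hUlaw] at *
    rw [Measure.map_apply hU measurableSet_closedBall.compl] at hsupp
    exact hsupp
  have h2 : μ ({ω | 3*ε < |⟪w, U ω + E ω⟫|} ∩ s) ≤ μ (T ∩ s) := by
    have hsub : {ω | 3*ε < |⟪w, U ω + E ω⟫|} ∩ s ⊆ (T ∩ s) ∪ {ω | ¬ ‖U ω‖ ≤ R} := by
      rintro ω ⟨hω1, hω2⟩
      by_cases hωU : ‖U ω‖ ≤ R
      · exact Or.inl ⟨hincl ω hω1 hωU, hω2⟩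
      · exact Or.inr hωU
    calc μ ({ω | 3*ε < |⟪w, U ω + E ω⟫|} ∩ s) ≤ μ ((T ∩ s) ∪ {ω | ¬ ‖U ω‖ ≤ R}) :=
          measure_mono hsub
      _ ≤ μ (T ∩ s) + μ {ω | ¬ ‖U ω‖ ≤ R} := measure_union_le _ _
      _ = μ (T ∩ s) := by rw [hnull, add_zero]
  calc μ s ≤ 2 * μ ({ω | 3*ε < |⟪w, U ω + E ω⟫|} ∩ s) := h1
    _ ≤ 2 * μ (T ∩ s) := mul_le_mul_right h2 2
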